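/- Let T be a 2-dimensional complex triassociative algebra with basis {x, y} such that x ⊢ x = x, all other ⊢-products of basis elements are zero, and y ⊣ x = 0 (with x⊣x = x, x⊣y = y⊣y = 0). Then x ⊥ x = x, x ⊥ y = 0, y ⊥ x = 0, and y ⊥ y = β y for some β ∈ ℂ; i.e., T is isomorphic to Trias₂²⁷. -/

import Mathlib

/-- A triassociative algebra structure on a complex vector space `T`:
three bilinear operations `l` (⊢), `r` (⊣), `m` (⊥) satisfying the
11 Loday–Ronco identities. -/
structure Trias (T : Type*) [AddCommGroup T] [Module ℂ T] where
  l : T →ₗ[ℂ] T →ₗ[ℂ] T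
  r : T →ₗ[ℂ] T →ₗ[ℂ] T
  m : T →ₗ[ℂ] T →ₗ[ℂ] T
  A1 : ∀ x y z, l (l x y) z = l x (l y z)
  A2 : ∀ x y z, r (r x y) z = r x (r y z)
  D1 : ∀ x y z, l (r x y) z = l x (l y z)
  D2 : ∀ x y z, r (r x y) z = r x (l y z)
  S1 : ∀ x y z, r (l x y) z = l x (r y z)
  T1 : ∀ x y z, l (m x y) z = l x (l y z)
  T2 : ∀ x y z, r (r x y) z = r x (m y z)
  T3 : ∀ x y z, m (l x y) z = l x (m y z)
  T4 : ∀ x y z, r (m x y) z = m x (r y z)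
  S2 : ∀ x y z, m (r x y) z = m x (l y z)
  A3 : ∀ x y z, m (m x y) z = m x (m y z)

/-- In a 2-dimensional complex triassociative algebra with basis `{x, y}`
where `x⊢x = x`, all other `⊢`-products of basis elements vanish,
`x⊣x = x`, and `x⊣y = y⊣x = y⊣y = 0`, one has `x⊥x = x`, `x⊥y = 0`,
`y⊥x = 0`, `y⊥y = βy` for some `β ∈ ℂ` (so `T ≅ Trias₂²⁷`). -/
theorem stmt12 {T : Type*} [AddCommGroup T] [Module ℂ T]
    (b : Module.Basis (Fin 2) ℂ T) (A : Trias T)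
    (x : T) (y : T) (hx : x = b 0) (hy : y = b 1)
    (h1 : A.l x x = x) (h2 : A.l x y = 0) (h3 : A.l y x = 0) (h4 : A.l y y = 0)
    (h5 : A.r x x = x) (h6 : A.r x y = 0) (h7 : A.r y x = 0) (h8 : A.r y y = 0) :
    A.m x x = x ∧ A.m x y = 0 ∧ A.m y x = 0 ∧ ∃ β : ℂ, A.m y y = β • y := by
  have hxne : x ≠ 0 := by rw [hx]; exact b.ne_zero 0
  have hyne : y ≠ 0 := by rw [hy]; exact b.ne_zero 1
  have hrepr : ∀ t : T, ∃ p q : ℂ, t = p • x + q • y := by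
    intro t
    refine ⟨b.repr t 0, b.repr t 1, ?_⟩
    have h := b.sum_repr t
    rw [Fin.sum_univ_two] at h
    rw [hx, hy]; exact h.symm
  -- m x x
  obtain ⟨p, q, hpq⟩ := hrepr (A.m x x)
  have e1 : A.m x x = A.l x (A.m x x) := by
    have h := A.T3 x x x; rw [h1] at h; exact h
  have e1' : p • x + q • y = p • x := by
    rw [← hpq, e1, hpq]; simp [map_add, map_smul, h1, h2]
  have hq : q = 0 := by
    have hq0 : q • y = 0 := by
      have := e1'; exact add_eq_left.mp this
    rcases smul_eq_zero.mp hq0 with h | h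
    · exact h
    · exact absurd h hyne
  have hmxx' : A.m x x = p • x := by rw [hpq, hq, zero_smul, add_zero]
  have e2 : x = p • x := by
    have h := A.T2 x x x; rw [h5, hmxx'] at h
    rw [h5] at h
    simpa [map_smul, h5] using h
  have hp : p = 1 := by
    have hz : (1 - p) • x = 0 := by rw [sub_smul, one_smul, ← e2, sub_self]
    rcases smul_eq_zero.mp hz with h | h
    · exact (sub_eq_zero.mp h).symm
    · exact absurd h hxne
  have hmxx : A.m x x = x := by rw [hmxx', hp, one_smul]
  -- m x y
  obtain ⟨c, d, hcd⟩ := hrepr (A.m x y)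
  have e3 : A.m x y = A.l x (A.m x y) := by
    have h := A.T3 x x y; rw [h1] at h; exact h
  have e3' : c • x + d • y = c • x := by
    rw [← hcd, e3, hcd]; simp [map_add, map_smul, h1, h2]
  have hd : d = 0 := by
    have hd0 : d • y = 0 := add_eq_left.mp e3'
    rcases smul_eq_zero.mp hd0 with h | h
    · exact h
    · exact absurd h hyne
  have hmxy' : A.m x y = c • x := by rw [hcd, hd, zero_smul, add_zero]
  have hc : c = 0 := by
    have h := A.T4 x y x
    rw [h7, map_zero, hmxy'] at h
    have : c • x = 0 := by
      simpa [map_smul, LinearMap.smul_apply, h5] using h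
    rcases smul_eq_zero.mp this with h' | h'
    · exact h'
    · exact absurd h' hxne
  have hmxy : A.m x y = 0 := by rw [hmxy', hc, zero_smul]
  -- m y x
  obtain ⟨e, f, hef⟩ := hrepr (A.m y x)
  have e4 : A.r (A.m y x) x = A.m y x := by
    have h := A.T4 y x x; rw [h5] at h; exact h
  have e4' : e • x = e • x + f • y := by
    rw [← hef]
    calc e • x = A.r (A.m y x) x := by
          rw [hef]; simp [map_add, map_smul, LinearMap.smul_apply, h5, h7]
      _ = A.m y x := e4
  have hf : f = 0 := by
    have hf0 : f • y = 0 := (add_eq_left.mp e4'.symm)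
    rcases smul_eq_zero.mp hf0 with h | h
    · exact h
    · exact absurd h hyne
  have hmyx' : A.m y x = e • x := by rw [hef, hf, zero_smul, add_zero]
  have he : e = 0 := by
    have h := A.T3 x y x
    rw [h2, map_zero, hmyx'] at h
    have : e • x = 0 := by simpa [map_smul, h1] using h.symm
    rcases smul_eq_zero.mp this with h' | h'
    · exact h'
    · exact absurd h' hxne
  have hmyx : A.m y x = 0 := by rw [hmyx', he, zero_smul]
  -- m y y
  obtain ⟨u, v, huv⟩ := hrepr (A.m y y)
  have e5 : (0 : T) = A.l x (A.m y y) := by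
    have h := A.T3 x y y; rw [h2, map_zero] at h; exact h
  have e5' : (0 : T) = u • x := by
    rw [e5, huv]; simp [map_add, map_smul, h1, h2]
  have hu : u = 0 := by
    rcases smul_eq_zero.mp e5'.symm with h | h
    · exact h
    · exact absurd h hxne
  refine ⟨hmxx, hmxy, hmyx, v, ?_⟩
  rw [huv, hu, zero_smul, zero_add]
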